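/- Let φ ∈ O_K[x] be Eisenstein with root α and L = K(α). Let S be a segment of the ramification polygon of φ of slope −h/e and A its residual polynomial. Let β = δ·α with v_α(δ) = 0 be another uniformizer of L and ψ its minimal polynomial over K. If γ̄_1, …, γ̄_m are the (not necessarily distinct) zeros of A in an algebraic closure of 𝕂, then γ̄_1/δ̄^h, …, γ̄_m/δ̄^h are the zeros of the residual polynomial of the segment of slope −h/e of the ramification polygon of ψ. -/

import Mathlib

open Polynomial

namespace RamificationStmt14

variable {K L : Type*} [Field K] [Field L]

def IsEisenstein (v : AddValuation K (WithTop ℤ)) (φ : Polynomial K) : Prop :=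
  φ.Monic ∧ (∀ i < φ.natDegree, ((1 : ℤ) : WithTop ℤ) ≤ v (φ.coeff i)) ∧
    v (φ.coeff 0) = ((1 : ℤ) : WithTop ℤ)

/-- Coefficients of the ramification polynomial `ρ(x) = φ(αx+α)/α^n`. -/
noncomputable def rho [Algebra K L] (φ : Polynomial K) (α : L) (n i : ℕ) : L :=
  ∑ k ∈ Finset.Icc i n, (Nat.choose k i : L) * (algebraMap K L (φ.coeff k)) * α ^ ((k : ℤ) - (n : ℤ))

/-- The valuation ring `O_L = {x | w(x) ≥ 0}`. -/
def vintegers (w : AddValuation L (WithTop ℤ)) : Subring L where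
  carrier := {x | 0 ≤ w x}
  zero_mem' := by simp [AddValuation.map_zero]
  one_mem' := by simp [AddValuation.map_one]
  add_mem' := by
    intro a b ha hb
    exact le_trans (le_min ha hb) (w.map_add a b)
  neg_mem' := by
    intro a ha
    simpa [AddValuation.map_neg] using ha
  mul_mem' := by
    intro a b ha hb
    simp only [Set.mem_setOf_eq] at *
    rw [w.map_mul]
    exact add_nonneg ha hb

/-- `A` is the residual polynomial of the segment of the Newton polygon of the ramification
polynomial of `φ` (w.r.t. the root `α`) with endpoints `(x0,y0)`, `(x1,y1)` and slope `−h/e`,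
expressed via the section `lift : 𝕜 → K` of the residue map: each coefficient of the residual
polynomial is the residue of `ρ_{je+x0}·α^{jh−y0}`, and all points of the polygon lie on or
above the segment's line. -/
def IsSegmentWithResidual {𝕜 : Type*} [Field 𝕜] [Algebra K L]
    (w : AddValuation L (WithTop ℤ)) (lift : 𝕜 → K)
    (φ : Polynomial K) (α : L) (n : ℕ) (x0 x1 : ℕ) (y0 y1 : ℤ) (h e : ℕ)
    (A : Polynomial 𝕜) : Prop :=
  0 < x0 ∧ x0 < x1 ∧ x1 ≤ n ∧ 0 < e ∧ Nat.Coprime h e ∧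
  w (rho φ α n x0) = (y0 : WithTop ℤ) ∧ w (rho φ α n x1) = (y1 : WithTop ℤ) ∧
  (e : ℤ) * (y0 - y1) = h * ((x1 : ℤ) - x0) ∧
  (∀ m : ℕ, 1 ≤ m → m ≤ n → ∀ c : ℤ, w (rho φ α n m) = (c : WithTop ℤ) →
    (e : ℤ) * y0 - h * ((m : ℤ) - x0) ≤ (e : ℤ) * c) ∧
  A.natDegree ≤ (x1 - x0) / e ∧
  (∀ j ≤ (x1 - x0) / e,
    0 < w (rho φ α n (j * e + x0) * α ^ ((j : ℤ) * h - y0) - algebraMap K L (lift (A.coeff j))))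

end RamificationStmt14

open Polynomial

namespace Stmt14Aux

variable {F : Type*} [Field F]

theorem val_eq_top_iff (w : AddValuation F (WithTop ℤ)) {x : F} : w x = ⊤ ↔ x = 0 := by
  constructor
  · intro hx
    by_contra hx0
    have h1 : w (x * x⁻¹) = w x + w x⁻¹ := w.map_mul _ _
    rw [mul_inv_cancel₀ hx0, w.map_one, hx, top_add] at h1
    exact (by simp : (0 : WithTop ℤ) ≠ ⊤) h1
  · rintro rfl; exact w.map_zero

theorem val_ne_top (w : AddValuation F (WithTop ℤ)) {x : F} (hx : x ≠ 0) : w x ≠ ⊤ :=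
  fun h => hx ((val_eq_top_iff w).1 h)

theorem ne_zero_of_val_coe (w : AddValuation F (WithTop ℤ)) {x : F} {c : ℤ}
    (hx : w x = (c : WithTop ℤ)) : x ≠ 0 := by
  intro h; rw [h, w.map_zero] at hx; exact (by simp : (⊤ : WithTop ℤ) ≠ (c : WithTop ℤ)) hx

theorem nsmul_coe (m : ℕ) (c : ℤ) :
    m • ((c : ℤ) : WithTop ℤ) = ((m * c : ℤ) : WithTop ℤ) := by
  rw [← WithTop.coe_nsmul]
  norm_num

theorem val_inv (w : AddValuation F (WithTop ℤ)) {x : F} {c : ℤ}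
    (hx : w x = (c : WithTop ℤ)) : w x⁻¹ = ((-c : ℤ) : WithTop ℤ) := by
  have hx0 : x ≠ 0 := ne_zero_of_val_coe w hx
  have h1 : w (x * x⁻¹) = w x + w x⁻¹ := w.map_mul _ _
  rw [mul_inv_cancel₀ hx0, w.map_one, hx] at h1
  obtain ⟨d, hd⟩ := WithTop.ne_top_iff_exists.1 (val_ne_top w (inv_ne_zero hx0))
  rw [← hd] at h1 ⊢
  rw [← WithTop.coe_add] at h1
  have : c + d = 0 := by exact_mod_cast h1.symm
  have hd2 : d = -c := by omega
  rw [hd2]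

theorem val_zpow (w : AddValuation F (WithTop ℤ)) {x : F} {c : ℤ}
    (hx : w x = (c : WithTop ℤ)) (z : ℤ) : w (x ^ z) = ((z * c : ℤ) : WithTop ℤ) := by
  cases z with
  | ofNat m =>
    rw [Int.ofNat_eq_coe, zpow_natCast, w.map_pow, hx, nsmul_coe]
  | negSucc m =>
    rw [zpow_negSucc, val_inv w (by rw [w.map_pow, hx, nsmul_coe] : w (x ^ (m+1)) = (((m+1 : ℕ) * c : ℤ) : WithTop ℤ))]
    congr 1
    simp [Int.negSucc_eq]
    push_cast
    ring

theorem val_sum_ge (w : AddValuation F (WithTop ℤ)) {ι : Type*} (s : Finset ι) (f : ι → F)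
    {c : WithTop ℤ} (H : ∀ i ∈ s, c ≤ w (f i)) : c ≤ w (∑ i ∈ s, f i) := by
  induction s using Finset.cons_induction with
  | empty => simp [w.map_zero]
  | cons a s ha ih =>
    rw [Finset.sum_cons]
    refine le_trans (le_min (H a (Finset.mem_cons_self a s)) (ih fun i hi => H i (Finset.mem_cons_of_mem hi))) ?_
    exact w.map_add _ _

theorem coe_lt_iff_succ_le {c : ℤ} {d : WithTop ℤ} :
    (c : WithTop ℤ) < d ↔ ((c + 1 : ℤ) : WithTop ℤ) ≤ d := by
  cases d with
  | top => simp [WithTop.coe_lt_top]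
  | coe d => rw [WithTop.coe_lt_coe, WithTop.coe_le_coe]; omega

theorem val_add_eq_left (w : AddValuation F (WithTop ℤ)) {x y : F} (hxy : w x < w y) :
    w (x + y) = w x := by
  refine le_antisymm ?_ (by simpa [min_eq_left hxy.le] using w.map_add x y)
  have h2 : min (w (x + y)) (w y) ≤ w x := by
    simpa [w.map_neg] using w.map_add (x + y) (-y)
  rcases le_total (w (x + y)) (w y) with h | h
  · rwa [min_eq_left h] at h2
  · rw [min_eq_right h] at h2; exact absurd (lt_of_lt_of_le hxy h2) (lt_irrefl _)

theorem val_sum_eq_of_strict_min (w : AddValuation F (WithTop ℤ)) {ι : Type*} [DecidableEq ι]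
    (s : Finset ι) (f : ι → F) {i0 : ι} (hi0 : i0 ∈ s)
    (hmin : ∀ j ∈ s, j ≠ i0 → w (f i0) < w (f j)) :
    w (∑ i ∈ s, f i) = w (f i0) := by
  rw [← Finset.add_sum_erase s f hi0]
  rcases eq_or_ne (w (f i0)) ⊤ with htop | hne
  · have : s.erase i0 = ∅ := by
      refine Finset.eq_empty_of_forall_notMem fun j hj => ?_
      have := hmin j (Finset.mem_of_mem_erase hj) (Finset.ne_of_mem_erase hj)
      rw [htop] at this
      exact not_top_lt this
    rw [this, Finset.sum_empty, add_zero]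
  · obtain ⟨c, hc⟩ := WithTop.ne_top_iff_exists.1 hne
    refine val_add_eq_left w ?_
    rw [← hc]
    rw [coe_lt_iff_succ_le]
    refine val_sum_ge w _ _ fun j hj => ?_
    rw [← coe_lt_iff_succ_le, hc]
    exact hmin j (Finset.mem_of_mem_erase hj) (Finset.ne_of_mem_erase hj)

theorem val_natCast_nonneg (w : AddValuation F (WithTop ℤ)) (m : ℕ) : 0 ≤ w (m : F) := by
  induction m with
  | zero => simp [w.map_zero]
  | succ k ih =>
    push_cast
    refine le_trans (le_min ih (by rw [w.map_one])) (w.map_add _ _)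

theorem val_coe_lt_coe {c d : ℤ} : ((c : ℤ) : WithTop ℤ) < ((d:ℤ) : WithTop ℤ) ↔ c < d := WithTop.coe_lt_coe

section Expansion

variable {K L : Type*} [Field K] [Field L] [Algebra K L]
variable (v : AddValuation K (WithTop ℤ)) (w : AddValuation L (WithTop ℤ)) (n : ℕ)

theorem w_alg_nonneg (hcompat : ∀ x : K, w (algebraMap K L x) = n • v x)
    {x : K} (hx : 0 ≤ v x) : 0 ≤ w (algebraMap K L x) := by
  rw [hcompat]; exact nsmul_nonneg hx n

/-- valuation of a term `c·b^k`. -/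
theorem term_val (hcompat : ∀ x : K, w (algebraMap K L x) = n • v x) {b : L} (hb : w b = ((1:ℤ) : WithTop ℤ)) {c : K} {vc : ℤ}
    (hc : v c = (vc : WithTop ℤ)) (k : ℕ) :
    w (algebraMap K L c * b ^ k) = ((n * vc + k : ℤ) : WithTop ℤ) := by
  rw [w.map_mul, hcompat, hc, nsmul_coe, w.map_pow, hb, nsmul_coe, ← WithTop.coe_add]
  norm_num

/-- distinct exponents `< n+1` give distinct term valuations except the `0,n` pair. -/
theorem term_val_eq_cases (hcompat : ∀ x : K, w (algebraMap K L x) = n • v x) (hn : 0 < n) {b : L} (hb : w b = ((1:ℤ) : WithTop ℤ))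
    {c d : K} (hc : c ≠ 0) (hd : d ≠ 0) {k l : ℕ} (hk : k ≤ n) (hl : l ≤ n) (hkl : k ≠ l)
    (heq : w (algebraMap K L c * b ^ k) = w (algebraMap K L d * b ^ l)) :
    (k = 0 ∧ l = n) ∨ (k = n ∧ l = 0) := by
  obtain ⟨vc, hvc⟩ := WithTop.ne_top_iff_exists.1 (val_ne_top v hc)
  obtain ⟨vd, hvd⟩ := WithTop.ne_top_iff_exists.1 (val_ne_top v hd)
  rw [term_val v w n hcompat hb hvc.symm, term_val v w n hcompat hb hvd.symm] at heq
  have heqz : (n : ℤ) * vc + k = n * vd + l := by exact_mod_cast heq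
  have hdvd : (k : ℤ) - l = n * (vd - vc) := by linarith
  set t : ℤ := vd - vc with ht
  rcases lt_trichotomy t 0 with h1 | h1 | h1
  · -- k - l = n*t ≤ -n, so k = 0, l = n
    have h2 : (k : ℤ) - l ≤ -n := by
      have h3 : (n:ℤ) * t ≤ (n:ℤ) * (-1) :=
        mul_le_mul_of_nonneg_left (by omega) (by positivity)
      rw [hdvd]
      linarith
    have hkz : (0:ℤ) ≤ (k:ℤ) := Int.ofNat_nonneg k
    have hln : (l:ℤ) ≤ (n:ℤ) := by exact_mod_cast hl
    have hkn : (k:ℤ) ≤ (n:ℤ) := by exact_mod_cast hk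
    have hk0 : (k:ℤ) = 0 := by linarith
    have hl0 : (l:ℤ) = n := by linarith
    exact Or.inl ⟨by exact_mod_cast hk0, by exact_mod_cast hl0⟩
  · rw [h1, mul_zero] at hdvd
    have : (k:ℤ) = l := by linarith
    exact absurd (by exact_mod_cast this) hkl
  · have h2 : (n:ℤ) ≤ (k : ℤ) - l := by
      have : (n:ℤ) * 1 ≤ n * t := by
        apply mul_le_mul_of_nonneg_left (by omega) (by positivity)
      omega
    have hlz : (0:ℤ) ≤ (l:ℤ) := Int.ofNat_nonneg l
    have hln : (l:ℤ) ≤ (n:ℤ) := by exact_mod_cast hl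
    have hkn : (k:ℤ) ≤ (n:ℤ) := by exact_mod_cast hk
    have hl0 : (l:ℤ) = 0 := by linarith
    have hk0 : (k:ℤ) = n := by linarith
    exact Or.inr ⟨by exact_mod_cast hk0, by exact_mod_cast hl0⟩

theorem aeval_expand {b : L} (P : Polynomial K) {N : ℕ} (hdeg : P.natDegree < N) :
    Polynomial.aeval b P = ∑ k ∈ Finset.range N, algebraMap K L (P.coeff k) * b ^ k := by
  rw [aeval_eq_sum_range' hdeg]
  exact Finset.sum_congr rfl fun i _ => by rw [Algebra.smul_def]

/-- Core: a nonzero polynomial of degree `< N ≤ n+1` has a term of minimal valuation. -/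
theorem exists_min_term (P : Polynomial K) (hP : P ≠ 0) (N : ℕ) (hdeg : P.natDegree < N) :
    ∃ i0, i0 < N ∧ P.coeff i0 ≠ 0 ∧
      ∀ k < N, w (algebraMap K L (P.coeff i0) * (b : L) ^ i0) ≤ w (algebraMap K L (P.coeff k) * b ^ k) := by
  classical
  set s := (Finset.range N).filter (fun k => P.coeff k ≠ 0) with hs
  have hns : s.Nonempty := ⟨P.natDegree, by
    have : P.coeff P.natDegree ≠ 0 := by
      rw [← Polynomial.leadingCoeff]
      exact Polynomial.leadingCoeff_ne_zero.mpr hP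
    simp [hs, Finset.mem_filter, Finset.mem_range, hdeg, this, hP]⟩
  obtain ⟨i0, hi0s, hmin⟩ := Finset.exists_min_image s
    (fun k => w (algebraMap K L (P.coeff k) * b ^ k)) hns
  simp only [hs, Finset.mem_filter, Finset.mem_range] at hi0s
  refine ⟨i0, hi0s.1, hi0s.2, fun k hk => ?_⟩
  by_cases hck : P.coeff k = 0
  · rw [hck]; simp [w.map_zero]
  · exact hmin k (by simp [hs, Finset.mem_filter, Finset.mem_range, hk, hck])

theorem aeval_val_of_strict_min {b : L} (P : Polynomial K) {N : ℕ} (hdeg : P.natDegree < N)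
    {i0 : ℕ} (hi0 : i0 < N) (hci0 : P.coeff i0 ≠ 0)
    (hstrict : ∀ j < N, P.coeff j ≠ 0 → j ≠ i0 →
      w (algebraMap K L (P.coeff i0) * b ^ i0) < w (algebraMap K L (P.coeff j) * b ^ j)) :
    w (Polynomial.aeval b P) = w (algebraMap K L (P.coeff i0) * b ^ i0) := by
  classical
  rw [aeval_expand P hdeg]
  set f : ℕ → L := fun k => algebraMap K L (P.coeff k) * b ^ k with hf
  set s := (Finset.range N).filter (fun k => P.coeff k ≠ 0) with hs
  have hsum : ∑ k ∈ Finset.range N, f k = ∑ k ∈ s, f k := by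
    rw [hs]
    refine (Finset.sum_filter_of_ne fun k hk hfk => ?_).symm
    intro hck
    exact hfk (by simp [hf, hck])
  rw [hsum]
  refine val_sum_eq_of_strict_min w s f (by simp [hs, Finset.mem_filter, Finset.mem_range, hi0, hci0]) ?_
  intro j hj hji
  simp only [hs, Finset.mem_filter, Finset.mem_range] at hj
  exact hstrict j hj.1 hj.2 hji

end Expansion

theorem int_aux1 {n k c : ℤ} (hn : 0 < n) (hkn : k < n) (h : 0 ≤ n*c + k) : 0 ≤ c := by
  by_contra hc
  push_neg at hc
  have h3 : n * c ≤ n * (-1) := mul_le_mul_of_nonneg_left (by omega) (by omega)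
  linarith

theorem int_aux2 {n k c : ℤ} (hn : 0 < n) (hk : 0 ≤ k) (hkn : k < n) (h : n*c + k = 0) :
    c = 0 ∧ k = 0 := by
  have hc : 0 ≤ c := int_aux1 hn hkn (by omega)
  rcases eq_or_lt_of_le hc with h1 | h1
  · exact ⟨h1.symm, by rw [← h1, mul_zero] at h; omega⟩
  · have h3 : n * 1 ≤ n * c := mul_le_mul_of_nonneg_left (by omega) (by omega)
    linarith

theorem int_aux3 {n k c : ℤ} (hn : 0 < n) (hk : k ≤ n) (h : n ≤ n*c + k) : 0 ≤ c := by
  by_contra hc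
  push_neg at hc
  have h3 : n * c ≤ n * (-1) := mul_le_mul_of_nonneg_left (by omega) (by omega)
  linarith

section Expand2

variable {K L : Type*} [Field K] [Field L] [Algebra K L]
variable (v : AddValuation K (WithTop ℤ)) (w : AddValuation L (WithTop ℤ)) (n : ℕ)

theorem eq_zero_of_aeval_eq_zero (hcompat : ∀ x : K, w (algebraMap K L x) = n • v x)
    (hn : 0 < n) {b : L} (hb : w b = ((1:ℤ) : WithTop ℤ)) (P : Polynomial K)
    (hdeg : P.natDegree < n) (hP : Polynomial.aeval b P = 0) : P = 0 := by
  by_contra hP0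
  obtain ⟨i0, hi0N, hci0, hmin⟩ := exists_min_term w (b := b) P hP0 n hdeg
  have hstrict : ∀ j < n, P.coeff j ≠ 0 → j ≠ i0 →
      w (algebraMap K L (P.coeff i0) * b ^ i0) < w (algebraMap K L (P.coeff j) * b ^ j) := by
    intro j hj hcj hji
    rcases lt_or_eq_of_le (hmin j hj) with h1 | h1
    · exact h1
    · rcases term_val_eq_cases v w n hcompat hn hb hci0 hcj (by omega) (by omega)
        (fun hee => hji hee.symm) h1 with h2 | h2 <;> omega
  have heq := aeval_val_of_strict_min w (b := b) P hdeg hi0N hci0 hstrict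
  rw [hP, w.map_zero] at heq
  have : algebraMap K L (P.coeff i0) * b ^ i0 ≠ 0 := by
    apply mul_ne_zero
    · simpa using hci0
    · exact pow_ne_zero _ (ne_zero_of_val_coe w hb)
  exact val_ne_top w this heq.symm

theorem coeff_nonneg_of_aeval_val_zero (hcompat : ∀ x : K, w (algebraMap K L x) = n • v x)
    (hn : 0 < n) {b : L} (hb : w b = ((1:ℤ) : WithTop ℤ)) (P : Polynomial K)
    (hdeg : P.natDegree < n) (hval : w (Polynomial.aeval b P) = ((0:ℤ) : WithTop ℤ)) :
    ∀ k, 0 ≤ v (P.coeff k) := by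
  have hP0 : P ≠ 0 := by
    rintro rfl
    rw [map_zero, w.map_zero] at hval
    exact (by simp : (⊤ : WithTop ℤ) ≠ ((0:ℤ) : WithTop ℤ)) hval
  obtain ⟨i0, hi0N, hci0, hmin⟩ := exists_min_term w (b := b) P hP0 n hdeg
  have hstrict : ∀ j < n, P.coeff j ≠ 0 → j ≠ i0 →
      w (algebraMap K L (P.coeff i0) * b ^ i0) < w (algebraMap K L (P.coeff j) * b ^ j) := by
    intro j hj hcj hji
    rcases lt_or_eq_of_le (hmin j hj) with h1 | h1
    · exact h1
    · rcases term_val_eq_cases v w n hcompat hn hb hci0 hcj (by omega) (by omega)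
        (fun hee => hji hee.symm) h1 with h2 | h2 <;> omega
  have heq := aeval_val_of_strict_min w (b := b) P hdeg hi0N hci0 hstrict
  rw [hval] at heq
  obtain ⟨vc0, hvc0⟩ := WithTop.ne_top_iff_exists.1 (val_ne_top v hci0)
  rw [term_val v w n hcompat hb hvc0.symm] at heq
  have h0 : (n:ℤ) * vc0 + i0 = 0 := by exact_mod_cast heq.symm
  intro k
  by_cases hck : P.coeff k = 0
  · rw [hck, v.map_zero]; exact le_top
  · have hkn : k < n := lt_of_le_of_lt (Polynomial.le_natDegree_of_ne_zero hck) hdeg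
    obtain ⟨vk, hvk⟩ := WithTop.ne_top_iff_exists.1 (val_ne_top v hck)
    have hle := hmin k hkn
    rw [term_val v w n hcompat hb hvc0.symm, term_val v w n hcompat hb hvk.symm] at hle
    have h1 : (n:ℤ) * vc0 + i0 ≤ n * vk + k := by exact_mod_cast hle
    have h2 : (0:ℤ) ≤ n * vk + k := by omega
    have h3 : (0:ℤ) ≤ vk := int_aux1 (by exact_mod_cast hn) (by exact_mod_cast hkn) h2
    rw [← hvk]
    exact_mod_cast h3

theorem minpoly_unif (hcompat : ∀ x : K, w (algebraMap K L x) = n • v x)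
    (hn : 0 < n) [FiniteDimensional K L] (hfr : Module.finrank K L = n) {b : L}
    (hb : w b = ((1:ℤ) : WithTop ℤ)) :
    (minpoly K b).natDegree = n ∧ (∀ k, 0 ≤ v ((minpoly K b).coeff k)) := by
  set ψ := minpoly K b with hψdef
  have hint : IsIntegral K b := IsIntegral.of_finite K b
  have hψ0 : ψ ≠ 0 := minpoly.ne_zero hint
  have hmon : ψ.Monic := minpoly.monic hint
  have hdle : ψ.natDegree ≤ n := hfr ▸ minpoly.natDegree_le b
  have haev : Polynomial.aeval b ψ = 0 := minpoly.aeval K b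
  obtain ⟨i0, hi0N, hci0, hmin⟩ := exists_min_term w (b := b) ψ hψ0 (n+1) (by omega)
  have hnotstrict : ¬(∀ j < n+1, ψ.coeff j ≠ 0 → j ≠ i0 →
      w (algebraMap K L (ψ.coeff i0) * b ^ i0) < w (algebraMap K L (ψ.coeff j) * b ^ j)) := by
    intro hstrict
    have heq := aeval_val_of_strict_min w (b := b) ψ (by omega) hi0N hci0 hstrict
    rw [haev, w.map_zero] at heq
    have : algebraMap K L (ψ.coeff i0) * b ^ i0 ≠ 0 := by
      apply mul_ne_zero
      · simpa using hci0
      · exact pow_ne_zero _ (ne_zero_of_val_coe w hb)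
    exact val_ne_top w this heq.symm
  push_neg at hnotstrict
  obtain ⟨j, hjN, hcj, hji, hle⟩ := hnotstrict
  have heq : w (algebraMap K L (ψ.coeff i0) * b ^ i0)
      = w (algebraMap K L (ψ.coeff j) * b ^ j) := le_antisymm (hmin j hjN) hle
  have hcases := term_val_eq_cases v w n hcompat hn hb hci0 hcj (by omega) (by omega)
    (fun hee => hji hee.symm) heq
  -- in either case, coeff n ≠ 0, so natDegree = n
  have hcn : ψ.coeff n ≠ 0 := by
    rcases hcases with ⟨h1, h2⟩ | ⟨h1, h2⟩
    · rwa [h2] at hcj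
    · rwa [h1] at hci0
  have hdeg : ψ.natDegree = n :=
    le_antisymm hdle (Polynomial.le_natDegree_of_ne_zero hcn)
  -- the minimal term valuation is n
  have hvn : v (ψ.coeff n) = ((0:ℤ) : WithTop ℤ) := by
    have : ψ.coeff n = 1 := by rw [← hdeg]; exact hmon.coeff_natDegree
    rw [this]
    exact v.map_one
  have hvaln : w (algebraMap K L (ψ.coeff n) * b ^ n) = ((n:ℤ) : WithTop ℤ) := by
    rw [term_val v w n hcompat hb hvn]
    norm_num
  have hminval : w (algebraMap K L (ψ.coeff i0) * b ^ i0) = ((n:ℤ) : WithTop ℤ) := by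
    rcases hcases with ⟨h1, h2⟩ | ⟨h1, h2⟩
    · rw [heq, h2, hvaln]
    · rw [h1, hvaln]
  refine ⟨hdeg, fun k => ?_⟩
  by_cases hck : ψ.coeff k = 0
  · rw [hck, v.map_zero]; exact le_top
  · have hkn : k ≤ n := hdeg ▸ Polynomial.le_natDegree_of_ne_zero hck
    obtain ⟨vk, hvk⟩ := WithTop.ne_top_iff_exists.1 (val_ne_top v hck)
    have hle2 := hmin k (by omega)
    rw [hminval, term_val v w n hcompat hb hvk.symm] at hle2
    have h1 : (n:ℤ) ≤ n * vk + k := by exact_mod_cast hle2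
    have h3 : (0:ℤ) ≤ vk := int_aux3 (by exact_mod_cast hn) (by exact_mod_cast hkn) h1
    rw [← hvk]
    exact_mod_cast h3

end Expand2

section IntPoly

variable {K : Type*} [Field K] (v : AddValuation K (WithTop ℤ))

/-- polynomials with `v`-integral coefficients -/
def IntPoly (P : Polynomial K) : Prop := ∀ k, 0 ≤ v (P.coeff k)

theorem intPoly_add {P Q : Polynomial K} (hP : IntPoly v P) (hQ : IntPoly v Q) :
    IntPoly v (P + Q) := fun k => by
  rw [Polynomial.coeff_add]
  exact le_trans (le_min (hP k) (hQ k)) (v.map_add _ _)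

theorem intPoly_neg {P : Polynomial K} (hP : IntPoly v P) : IntPoly v (-P) := fun k => by
  rw [Polynomial.coeff_neg, v.map_neg]; exact hP k

theorem intPoly_sub {P Q : Polynomial K} (hP : IntPoly v P) (hQ : IntPoly v Q) :
    IntPoly v (P - Q) := by
  rw [sub_eq_add_neg]; exact intPoly_add v hP (intPoly_neg v hQ)

theorem intPoly_mul {P Q : Polynomial K} (hP : IntPoly v P) (hQ : IntPoly v Q) :
    IntPoly v (P * Q) := fun k => by
  rw [Polynomial.coeff_mul]
  refine val_sum_ge v _ _ fun p _ => ?_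
  rw [v.map_mul]
  exact add_nonneg (hP p.1) (hQ p.2)

theorem intPoly_pow {P : Polynomial K} (hP : IntPoly v P) (m : ℕ) : IntPoly v (P ^ m) := by
  induction m with
  | zero =>
    intro k
    rcases eq_or_ne k 0 with rfl | hk
    · simp [v.map_one]
    · simp [Polynomial.coeff_one, hk, v.map_zero]
  | succ m ih => rw [pow_succ]; exact intPoly_mul v ih hP

theorem intPoly_C {c : K} (hc : 0 ≤ v c) : IntPoly v (Polynomial.C c) := fun k => by
  rcases eq_or_ne k 0 with rfl | hk
  · simpa using hc
  · simp [Polynomial.coeff_C, hk, v.map_zero]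

theorem intPoly_sum {ι : Type*} (s : Finset ι) (f : ι → Polynomial K)
    (hf : ∀ i ∈ s, IntPoly v (f i)) : IntPoly v (∑ i ∈ s, f i) := fun k => by
  rw [Polynomial.finset_sum_coeff]
  exact val_sum_ge v _ _ fun i hi => hf i hi k

theorem intPoly_comp {P Q : Polynomial K} (hP : IntPoly v P) (hQ : IntPoly v Q) :
    IntPoly v (P.comp Q) := by
  rw [Polynomial.comp_eq_sum_left, Polynomial.sum_def]
  exact intPoly_sum v _ _ fun i _ => intPoly_mul v (intPoly_C v (hP i)) (intPoly_pow v hQ i)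

/-- if `q` is monic with integral coefficients and `q*H` has integral coefficients,
so does `H`. -/
theorem intPoly_of_monic_mul {q : Polynomial K} (hq : q.Monic) (hqi : IntPoly v q) :
    ∀ (N : ℕ) (H : Polynomial K), H.support.card ≤ N → IntPoly v (q * H) → IntPoly v H := by
  intro N
  induction N with
  | zero =>
    intro H hcard _
    have : H.support = ∅ := Finset.card_eq_zero.mp (Nat.le_zero.mp hcard)
    rw [Polynomial.support_eq_empty] at this
    rw [this]
    intro k; simp [v.map_zero]
  | succ N ih =>
    intro H hcard hqH
    rcases eq_or_ne H 0 with rfl | hH0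
    · intro k; simp [v.map_zero]
    · have hlead : 0 ≤ v H.leadingCoeff := by
        have h1 := Polynomial.coeff_mul_degree_add_degree q H
        rw [hq.leadingCoeff, one_mul] at h1
        rw [← h1]
        exact hqH _
      have hCX : IntPoly v (Polynomial.C H.leadingCoeff * Polynomial.X ^ H.natDegree) :=
        intPoly_mul v (intPoly_C v hlead) (intPoly_pow v (fun k => by
          rcases eq_or_ne k 1 with rfl | hk
          · simp [v.map_one]
          · simp [Polynomial.coeff_X, hk, v.map_zero, Ne.symm hk]) _)
      have herase : IntPoly v H.eraseLead := by
        refine ih H.eraseLead (by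
          have := Polynomial.eraseLead_support_card_lt hH0
          omega) ?_
        have hE : H.eraseLead = H - Polynomial.C H.leadingCoeff * Polynomial.X ^ H.natDegree :=
          eq_sub_of_add_eq (Polynomial.eraseLead_add_C_mul_X_pow H)
        rw [hE, mul_sub]
        exact intPoly_sub v hqH (intPoly_mul v hqi hCX)
      have : H = H.eraseLead + Polynomial.C H.leadingCoeff * Polynomial.X ^ H.natDegree :=
        (Polynomial.eraseLead_add_C_mul_X_pow H).symm
      rw [this]
      exact intPoly_add v herase hCX

end IntPoly

section CompCoeff

variable {K L : Type*} [Field K] [Field L] [Algebra K L]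

open RamificationStmt14

theorem comp_linear_coeff (q : Polynomial K) (a : L) (t : ℕ) :
    ((q.map (algebraMap K L)).comp (Polynomial.C a * Polynomial.X + Polynomial.C a)).coeff t
      = ∑ k ∈ Finset.range (q.natDegree + 1),
          algebraMap K L (q.coeff k) * a ^ k * (k.choose t : L) := by
  have h1 : Polynomial.C a * Polynomial.X + Polynomial.C a
      = Polynomial.C a * (Polynomial.X + 1) := by ring
  rw [h1, Polynomial.comp_eq_sum_left]
  rw [Polynomial.sum_over_range' _ (fun m => by simp) (q.natDegree + 1)
    (lt_of_le_of_lt Polynomial.natDegree_map_le (lt_add_one _))]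
  rw [Polynomial.finset_sum_coeff]
  refine Finset.sum_congr rfl fun k _ => ?_
  rw [mul_pow, ← Polynomial.C_pow, ← mul_assoc, ← Polynomial.C_mul, Polynomial.coeff_C_mul,
    Polynomial.coeff_X_add_one_pow, Polynomial.coeff_map]
  try ring

theorem comp_linear_coeff_rho (n : ℕ) (q : Polynomial K) (hdq : q.natDegree ≤ n)
    {a : L} (ha : a ≠ 0) (i : ℕ) :
    ((q.map (algebraMap K L)).comp (Polynomial.C a * Polynomial.X + Polynomial.C a)).coeff i
      = a ^ n * rho q a n i := by
  rw [comp_linear_coeff]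
  unfold rho
  rw [Finset.mul_sum]
  have hterm : ∀ k ∈ Finset.Icc i n,
      a ^ n * ((k.choose i : L) * algebraMap K L (q.coeff k) * a ^ ((k:ℤ) - (n:ℤ)))
      = algebraMap K L (q.coeff k) * a ^ k * (k.choose i : L) := by
    intro k hk
    have hz : a ^ (n:ℕ) * a ^ ((k:ℤ) - (n:ℤ)) = a ^ k := by
      rw [← zpow_natCast a n, ← zpow_add₀ ha, ← zpow_natCast a k]
      congr 1
      ring
    calc a ^ n * ((k.choose i : L) * algebraMap K L (q.coeff k) * a ^ ((k:ℤ) - (n:ℤ)))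
        = (a ^ (n:ℕ) * a ^ ((k:ℤ) - (n:ℤ))) * ((k.choose i : L) * algebraMap K L (q.coeff k)) := by
          ring
      _ = algebraMap K L (q.coeff k) * a ^ k * (k.choose i : L) := by rw [hz]; ring
  rw [Finset.sum_congr rfl hterm]
  -- both sides equal the sum over range (n+1)
  have e1 : ∑ k ∈ Finset.range (q.natDegree + 1), algebraMap K L (q.coeff k) * a ^ k * (k.choose i : L)
      = ∑ k ∈ Finset.range (n + 1), algebraMap K L (q.coeff k) * a ^ k * (k.choose i : L) := by
    refine Finset.sum_subset (Finset.range_subset_range.mpr (by omega)) fun k hk hk2 => ?_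
    rw [Finset.mem_range] at hk hk2
    rw [Polynomial.coeff_eq_zero_of_natDegree_lt (by omega), map_zero, zero_mul, zero_mul]
  have e2 : ∑ k ∈ Finset.Icc i n, algebraMap K L (q.coeff k) * a ^ k * (k.choose i : L)
      = ∑ k ∈ Finset.range (n + 1), algebraMap K L (q.coeff k) * a ^ k * (k.choose i : L) := by
    refine Finset.sum_subset (fun k hk => Finset.mem_range.mpr (by
      have := (Finset.mem_Icc.mp hk).2; omega)) fun k hk hk2 => ?_
    rw [Finset.mem_range] at hk
    rw [Finset.mem_Icc] at hk2
    have hki : k < i := by omega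
    rw [Nat.choose_eq_zero_of_lt hki]
    simp
  rw [e1, e2]

theorem rho_zero (n : ℕ) (q : Polynomial K) (hdq : q.natDegree ≤ n) {a : L} (ha : a ≠ 0)
    (haev : Polynomial.aeval a q = 0) : rho q a n 0 = 0 := by
  have h1 := comp_linear_coeff_rho n q hdq ha 0
  have h2 : ((q.map (algebraMap K L)).comp (Polynomial.C a * Polynomial.X + Polynomial.C a)).coeff 0
      = Polynomial.aeval a q := by
    rw [Polynomial.coeff_zero_eq_eval_zero, Polynomial.eval_comp]
    simp [Polynomial.eval_map, Polynomial.aeval_def]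
  rw [h2, haev] at h1
  have := h1.symm
  rcases mul_eq_zero.mp this with h | h
  · exact absurd h (pow_ne_zero _ ha)
  · exact h

end CompCoeff

section CoeffBounds

variable {L : Type*} [Field L] (w : AddValuation L (WithTop ℤ))

theorem coeff_val_ge_mul {P Q : Polynomial L}
    (hP : ∀ t : ℕ, ((t:ℤ) : WithTop ℤ) ≤ w (P.coeff t))
    (hQ : ∀ t : ℕ, ((t:ℤ) : WithTop ℤ) ≤ w (Q.coeff t)) :
    ∀ t : ℕ, ((t:ℤ) : WithTop ℤ) ≤ w ((P*Q).coeff t) := by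
  intro t
  rw [Polynomial.coeff_mul]
  refine val_sum_ge w _ _ fun p hp => ?_
  rw [w.map_mul]
  have hpt : p.1 + p.2 = t := Finset.HasAntidiagonal.mem_antidiagonal.mp hp
  calc ((t:ℤ) : WithTop ℤ) = ((p.1 : ℤ) : WithTop ℤ) + ((p.2 : ℤ) : WithTop ℤ) := by
        rw [← WithTop.coe_add]
        norm_cast
        omega
    _ ≤ w (P.coeff p.1) + w (Q.coeff p.2) := add_le_add (hP p.1) (hQ p.2)

theorem coeff_val_ge_pow {P : Polynomial L}
    (hP : ∀ t : ℕ, ((t:ℤ) : WithTop ℤ) ≤ w (P.coeff t)) (i : ℕ) :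
    ∀ t : ℕ, ((t:ℤ) : WithTop ℤ) ≤ w ((P ^ i).coeff t) := by
  induction i with
  | zero =>
    intro t
    rcases eq_or_ne t 0 with rfl | ht
    · simp [w.map_one]
    · simp [Polynomial.coeff_one, ht, w.map_zero]
  | succ i ih =>
    rw [pow_succ]
    exact coeff_val_ge_mul w ih hP

theorem one_add_pow_sub_one {ε : L} (hε : ((1:ℤ) : WithTop ℤ) ≤ w ε) (m : ℕ) :
    ((1:ℤ) : WithTop ℤ) ≤ w ((1 + ε) ^ m - 1) := by
  induction m with
  | zero => simp [w.map_zero]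
  | succ m ih =>
    have hid : (1 + ε) ^ (m+1) - 1 = ((1 + ε) ^ m - 1) * (1 + ε) + ε := by ring
    rw [hid]
    refine le_trans (le_min ?_ hε) (w.map_add _ _)
    rw [w.map_mul]
    have h1 : (0 : WithTop ℤ) ≤ w (1 + ε) := by
      refine le_trans (le_min (by rw [w.map_one]) ?_) (w.map_add _ _)
      exact le_trans (by norm_num) hε
    calc ((1:ℤ) : WithTop ℤ) = ((1:ℤ) : WithTop ℤ) + 0 := by rw [add_zero]
      _ ≤ w ((1 + ε) ^ m - 1) + w (1 + ε) := add_le_add ih h1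

end CoeffBounds

section Scale

variable {F : Type*} [Field F]

theorem comp_C_mul_X_coeff (A : Polynomial F) (b : F) (j : ℕ) :
    (A.comp (Polynomial.C b * Polynomial.X)).coeff j = A.coeff j * b ^ j := by
  rw [Polynomial.comp_eq_sum_left,
    Polynomial.sum_over_range' _ (fun m => by simp) (A.natDegree + 1) (lt_add_one _),
    Polynomial.finset_sum_coeff]
  have hterm : ∀ e ∈ Finset.range (A.natDegree + 1),
      (Polynomial.C (A.coeff e) * (Polynomial.C b * Polynomial.X) ^ e).coeff j
      = if e = j then A.coeff j * b ^ j else 0 := by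
    intro e _
    rw [mul_pow, ← Polynomial.C_pow, ← mul_assoc, ← Polynomial.C_mul, Polynomial.coeff_C_mul,
      Polynomial.coeff_X_pow]
    by_cases hej : e = j
    · subst hej; simp
    · simp [hej, Ne.symm hej]
  rw [Finset.sum_congr rfl hterm, Finset.sum_ite_eq' (Finset.range (A.natDegree + 1))]
  by_cases hj : j ∈ Finset.range (A.natDegree + 1)
  · rw [if_pos hj]
  · rw [if_neg hj]
    rw [Finset.mem_range] at hj
    rw [Polynomial.coeff_eq_zero_of_natDegree_lt (by omega), zero_mul]

theorem roots_comp_C_mul_X {F : Type*} [Field F] [IsAlgClosed F] (P : Polynomial F)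
    (hP : P ≠ 0) {b : F} (hb : b ≠ 0) :
    (P.comp (Polynomial.C b * Polynomial.X)).roots = P.roots.map (fun z => z / b) := by
  have hfact : P = Polynomial.C P.leadingCoeff
      * (P.roots.map (fun r => Polynomial.X - Polynomial.C r)).prod :=
    (IsAlgClosed.splits P).eq_prod_roots
  have hcomp : ∀ (M : Multiset (Polynomial F)),
      M.prod.comp (Polynomial.C b * Polynomial.X)
        = (M.map (fun p => p.comp (Polynomial.C b * Polynomial.X))).prod := by
    intro M
    induction M using Multiset.induction with
    | empty => simp
    | cons p M ih => simp [Polynomial.mul_comp, ih]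
  have heach : ∀ r : F, (Polynomial.X - Polynomial.C r).comp (Polynomial.C b * Polynomial.X)
      = Polynomial.C b * (Polynomial.X - Polynomial.C (r / b)) := by
    intro r
    rw [Polynomial.sub_comp, Polynomial.X_comp, Polynomial.C_comp, mul_sub, ← Polynomial.C_mul,
      mul_div_cancel₀ r hb]
  conv_lhs => rw [hfact]
  rw [Polynomial.mul_comp, Polynomial.C_comp, hcomp, Multiset.map_map]
  have hmape : (P.roots.map ((fun p => p.comp (Polynomial.C b * Polynomial.X))
      ∘ (fun r => Polynomial.X - Polynomial.C r)))
      = P.roots.map (fun r => Polynomial.C b * (Polynomial.X - Polynomial.C (r / b))) := by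
    refine Multiset.map_congr rfl fun r _ => ?_
    simp only [Function.comp_apply]
    exact heach r
  rw [hmape]
  rw [Multiset.prod_map_mul]
  have hconst : (P.roots.map (fun _ => Polynomial.C b)).prod
      = Polynomial.C (b ^ Multiset.card P.roots) := by
    rw [Multiset.map_const', Multiset.prod_replicate, Polynomial.C_pow]
  rw [hconst]
  have hmm : P.roots.map (fun r => Polynomial.X - Polynomial.C (r / b))
      = (P.roots.map (fun z => z / b)).map (fun a => Polynomial.X - Polynomial.C a) := by
    rw [Multiset.map_map]
    rfl
  rw [hmm, ← mul_assoc, ← Polynomial.C_mul]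
  rw [Polynomial.roots_C_mul _ (by
    exact mul_ne_zero (Polynomial.leadingCoeff_ne_zero.mpr hP) (pow_ne_zero _ hb))]
  exact Polynomial.roots_multiset_prod_X_sub_C _

end Scale

section Residue

open RamificationStmt14

variable {L 𝕜 : Type*} [Field L] [Field 𝕜]
variable (w : AddValuation L (WithTop ℤ)) (res : vintegers w →+* 𝕜)

theorem mem_vintegers {x : L} : x ∈ vintegers w ↔ 0 ≤ w x := Iff.rfl

theorem res_eq_of_val_pos (hres_ker : ∀ x : vintegers w, res x = 0 ↔ 0 < w (x : L))
    {x y : L} (hx : x ∈ vintegers w) (hy : y ∈ vintegers w) (hxy : 0 < w (x - y)) :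
    res ⟨x, hx⟩ = res ⟨y, hy⟩ := by
  have h1 : res (⟨x, hx⟩ - ⟨y, hy⟩) = 0 := by
    rw [hres_ker]
    exact hxy
  rw [map_sub] at h1
  exact sub_eq_zero.mp h1

end Residue

end Stmt14Aux

open Stmt14Aux

open RamificationStmt14 in
/-- Let `φ ∈ O_K[x]` be Eisenstein with root `α`, `L = K(α)`, `S` a segment of
the ramification polygon of `φ` of slope `−h/e` with residual polynomial `A`.  Let `β = δα`
(`v(δ) = 0`) be another uniformizer of `L` with minimal polynomial `ψ`, and let `A'` be the
residual polynomial of the segment of slope `−h/e` of the ramification polygon of `ψ`.  If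
`γ̄_1, …, γ̄_m` are the zeros of `A` in an algebraic closure of the residue field `𝕜`, then
`γ̄_1/δ̄^h, …, γ̄_m/δ̄^h` are the zeros of `A'` (as multisets, with multiplicity). -/
theorem stmt14 {p : ℕ} (hp : p.Prime) {K L 𝕜 : Type*} [Field K] [CharZero K] [Field L]
    [Field 𝕜] [Algebra K L]
    (v : AddValuation K (WithTop ℤ)) (π : K) (hπ : v π = ((1 : ℤ) : WithTop ℤ))
    (hresidue_char : 0 < v (p : K))
    (w : AddValuation L (WithTop ℤ))
    (res : vintegers w →+* 𝕜) (hres_surj : Function.Surjective res)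
    (hres_ker : ∀ x : vintegers w, res x = 0 ↔ 0 < w (x : L))
    (lift : 𝕜 → K) (hlift_int : ∀ x : 𝕜, 0 ≤ v (lift x))
    (hlift_sect : ∀ x : 𝕜, ∀ hx : algebraMap K L (lift x) ∈ vintegers w,
      res ⟨algebraMap K L (lift x), hx⟩ = x)
    (φ : Polynomial K) (n : ℕ) (hn : 0 < n) (hdeg : φ.natDegree = n)
    (hEis : IsEisenstein v φ)
    (α : L) (hroot : Polynomial.aeval α φ = 0) (hα : w α = ((1 : ℤ) : WithTop ℤ))
    (hgen : Algebra.adjoin K {α} = ⊤) (hfinrank : Module.finrank K L = n)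
    (hcompat : ∀ x : K, w (algebraMap K L x) = n • v x)
    (δ : L) (hδ : w δ = (0 : WithTop ℤ)) (β : L) (hβ : β = δ * α)
    (ψ : Polynomial K) (hψ : ψ = minpoly K β)
    (dbar : 𝕜) (hdbar : 0 < w (δ - algebraMap K L (lift dbar)))
    (x0 x1 : ℕ) (y0 y1 : ℤ) (h e : ℕ)
    (A A' : Polynomial 𝕜)
    (hA : IsSegmentWithResidual w lift φ α n x0 x1 y0 y1 h e A)
    (hA' : IsSegmentWithResidual w lift ψ β n x0 x1 y0 y1 h e A') :
    (A'.map (algebraMap 𝕜 (AlgebraicClosure 𝕜))).roots =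
      Multiset.map (fun z => z / (algebraMap 𝕜 (AlgebraicClosure 𝕜) dbar) ^ h)
        (A.map (algebraMap 𝕜 (AlgebraicClosure 𝕜))).roots := by
  classical
  obtain ⟨hx0pos, hx01, hx1n, hepos, hcop, hwx0, hwx1, hseg, hbound, hAdeg, hAres⟩ := hA
  obtain ⟨-, -, -, -, -, hwx0', hwx1', -, hbound', hAdeg', hAres'⟩ := hA'
  have hα0 : α ≠ 0 := ne_zero_of_val_coe w hα
  have hδcoe : w δ = ((0:ℤ) : WithTop ℤ) := by exact_mod_cast hδ
  have hδ0 : δ ≠ 0 := ne_zero_of_val_coe w hδcoe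
  have hβ0 : β ≠ 0 := by rw [hβ]; exact mul_ne_zero hδ0 hα0
  have hwβ : w β = ((1:ℤ) : WithTop ℤ) := by
    rw [hβ, w.map_mul, hδcoe, hα, ← WithTop.coe_add]
    norm_num
  have hFD : FiniteDimensional K L := FiniteDimensional.of_finrank_pos (hfinrank ▸ hn)
  obtain ⟨hψdeg, hψint⟩ : ψ.natDegree = n ∧ ∀ k, 0 ≤ v (ψ.coeff k) := by
    rw [hψ]; exact minpoly_unif v w n hcompat hn hfinrank hwβ
  have hψaev : Polynomial.aeval β ψ = 0 := by rw [hψ]; exact minpoly.aeval K β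
  have hφm : φ.Monic := hEis.1
  -- the polynomial g with g(α) = δ
  have hαadj : δ ∈ Algebra.adjoin K {α} := by rw [hgen]; exact Algebra.mem_top
  rw [Algebra.adjoin_singleton_eq_range_aeval] at hαadj
  obtain ⟨G, hG⟩ := hαadj
  have hφne1 : φ ≠ 1 := fun hh => by rw [hh, Polynomial.natDegree_one] at hdeg; omega
  set g : Polynomial K := G %ₘ φ with hgdef
  have hgdeg : g.natDegree < n := by
    rw [← hdeg]; exact Polynomial.natDegree_modByMonic_lt G hφm hφne1
  have hgα : Polynomial.aeval α g = δ := by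
    have h1 := Polynomial.modByMonic_add_div G φ
    have h2 : Polynomial.aeval α (G %ₘ φ + φ * (G /ₘ φ)) = Polynomial.aeval α G := by rw [h1]
    rw [map_add, map_mul, hroot, zero_mul, add_zero] at h2
    rw [h2]
    exact hG
  have hgint : ∀ k, 0 ≤ v (g.coeff k) :=
    coeff_nonneg_of_aeval_val_zero v w n hcompat hn hα g hgdeg (by rw [hgα, hδcoe])
  -- γ = X * g
  set γ : Polynomial K := Polynomial.X * g with hγdef
  have hXint : IntPoly v (Polynomial.X : Polynomial K) := by
    intro k
    rcases eq_or_ne k 1 with rfl | hk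
    · simp [v.map_one]
    · simp [Polynomial.coeff_X, hk, Ne.symm hk, v.map_zero]
  have hγint : IntPoly v γ := intPoly_mul v hXint hgint
  have hγdeg : γ.natDegree ≤ n := by
    refine le_trans Polynomial.natDegree_mul_le ?_
    rw [Polynomial.natDegree_X]
    omega
  have hγα : Polynomial.aeval α γ = β := by
    rw [hγdef, map_mul, Polynomial.aeval_X, hgα, hβ]
    ring
  -- H with φ * H = ψ ∘ γ
  set cψ : Polynomial K := ψ.comp γ with hcψdef
  have hcψint : IntPoly v cψ := intPoly_comp v hψint hγint
  set H : Polynomial K := cψ /ₘ φ with hHdef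
  have hrem : cψ %ₘ φ = 0 := by
    refine eq_zero_of_aeval_eq_zero v w n hcompat hn hα _
      (by rw [← hdeg]; exact Polynomial.natDegree_modByMonic_lt _ hφm hφne1) ?_
    have h1 := Polynomial.modByMonic_add_div cψ φ
    have h2 : Polynomial.aeval α (cψ %ₘ φ + φ * (cψ /ₘ φ)) = Polynomial.aeval α cψ := by rw [h1]
    rw [map_add, map_mul, hroot, zero_mul, add_zero] at h2
    rw [h2, hcψdef, Polynomial.aeval_comp, hγα, hψaev]
  have hfac : φ * H = cψ := by
    have h1 := Polynomial.modByMonic_add_div cψ φ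
    rw [hrem, zero_add] at h1
    exact h1
  have hφint : IntPoly v φ := by
    intro k
    rcases lt_trichotomy k n with hk | hk | hk
    · exact le_trans (by norm_num) (hEis.2.1 k (hdeg ▸ hk))
    · have : φ.coeff k = 1 := by
        subst hk
        rw [← hdeg]
        exact hφm.coeff_natDegree
      rw [this, v.map_one]
    · rw [Polynomial.coeff_eq_zero_of_natDegree_lt (by omega), v.map_zero]
      exact le_top
  have hHint : IntPoly v H := intPoly_of_monic_mul v hφm hφint _ H le_rfl (by rw [hfac]; exact hcψint)
  -- master identity
  set u : Polynomial L := Polynomial.C α * Polynomial.X + Polynomial.C α with hudef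
  set u' : Polynomial L := Polynomial.C β * Polynomial.X + Polynomial.C β with hu'def
  set Wp : Polynomial L := (γ.map (algebraMap K L)).comp u with hWpdef
  set Z : Polynomial L := Polynomial.C β⁻¹ * Wp - 1 with hZdef
  set Fφ : Polynomial L := (φ.map (algebraMap K L)).comp u with hFφdef
  set Gc : Polynomial L := (H.map (algebraMap K L)).comp u with hGcdef
  set Fψ : Polynomial L := (ψ.map (algebraMap K L)).comp u' with hFψdef
  have hWpZ : u'.comp Z = Wp := by
    rw [hu'def, Polynomial.add_comp, Polynomial.mul_comp, Polynomial.C_comp, Polynomial.X_comp,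
      hZdef]
    have : Polynomial.C β * (Polynomial.C β⁻¹ * Wp - 1)
        = (Polynomial.C β * Polynomial.C β⁻¹) * Wp - Polynomial.C β := by ring
    rw [this, ← Polynomial.C_mul, mul_inv_cancel₀ hβ0, Polynomial.C_1, one_mul]
    ring
  have hmaster : Fψ.comp Z = Fφ * Gc := by
    have h1 : (ψ.map (algebraMap K L)).comp (γ.map (algebraMap K L))
        = (φ.map (algebraMap K L)) * (H.map (algebraMap K L)) := by
      rw [← Polynomial.map_comp, ← Polynomial.map_mul, ← hcψdef, ← hfac]
    calc Fψ.comp Z = (ψ.map (algebraMap K L)).comp (u'.comp Z) :=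
          Polynomial.comp_assoc _ _ _
      _ = (ψ.map (algebraMap K L)).comp Wp := by rw [hWpZ]
      _ = ((ψ.map (algebraMap K L)).comp (γ.map (algebraMap K L))).comp u :=
          (Polynomial.comp_assoc _ _ _).symm
      _ = ((φ.map (algebraMap K L)) * (H.map (algebraMap K L))).comp u := by rw [h1]
      _ = Fφ * Gc := Polynomial.mul_comp _ _ _
  -- coefficient identifications
  have hFφc : ∀ i, Fφ.coeff i = α ^ n * rho φ α n i :=
    comp_linear_coeff_rho n φ hdeg.le hα0
  have hFψc : ∀ i, Fψ.coeff i = β ^ n * rho ψ β n i :=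
    comp_linear_coeff_rho n ψ hψdeg.le hβ0
  -- generic valuation bound for coefficients of (q.map ι).comp u
  have hwαpow : ∀ k : ℕ, w (α ^ k) = ((k : ℤ) : WithTop ℤ) := by
    intro k
    rw [w.map_pow, hα, nsmul_coe]
    norm_num
  have hcompval : ∀ (q : Polynomial K), (∀ k, 0 ≤ v (q.coeff k)) →
      ∀ t : ℕ, ((t:ℤ) : WithTop ℤ) ≤ w (((q.map (algebraMap K L)).comp u).coeff t) := by
    intro q hq t
    rw [hudef, comp_linear_coeff]
    refine val_sum_ge w _ _ fun k _ => ?_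
    by_cases hkt : k < t
    · rw [Nat.choose_eq_zero_of_lt hkt]
      push_cast
      rw [mul_zero, w.map_zero]
      exact le_top
    · push_neg at hkt
      rw [w.map_mul, w.map_mul]
      have h1 : 0 ≤ w (algebraMap K L (q.coeff k)) := w_alg_nonneg v w n hcompat (hq k)
      have h3 : 0 ≤ w ((k.choose t : L)) := val_natCast_nonneg w _
      calc ((t:ℤ) : WithTop ℤ) ≤ ((k:ℤ) : WithTop ℤ) := by exact_mod_cast hkt
        _ = 0 + ((k:ℤ) : WithTop ℤ) + 0 := by rw [zero_add, add_zero]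
        _ ≤ w (algebraMap K L (q.coeff k)) + w (α ^ k) + w ((k.choose t : L)) := by
            refine add_le_add (add_le_add h1 (le_of_eq (hwαpow k).symm)) h3
  have hGcval : ∀ t : ℕ, ((t:ℤ) : WithTop ℤ) ≤ w (Gc.coeff t) := hcompval H hHint
  have hWpval : ∀ t : ℕ, ((t:ℤ) : WithTop ℤ) ≤ w (Wp.coeff t) := hcompval γ hγint
  -- the constant coefficient of Gc and Wp
  have hcomp0 : ∀ (q : Polynomial K),
      ((q.map (algebraMap K L)).comp u).coeff 0 = Polynomial.aeval α q := by
    intro q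
    rw [Polynomial.coeff_zero_eq_eval_zero, Polynomial.eval_comp, hudef]
    simp [Polynomial.eval_map, Polynomial.aeval_def]
  have hGc0 : Gc.coeff 0 = Polynomial.aeval α H := hcomp0 H
  have hWp0 : Wp.coeff 0 = β := by rw [hWpdef, hcomp0 γ, hγα]
  have hHαval : (0 : WithTop ℤ) ≤ w (Polynomial.aeval α H) := by
    rw [← hGc0]
    exact_mod_cast hGcval 0
  -- Z facts
  have hZc0 : Z.coeff 0 = 0 := by
    rw [hZdef, Polynomial.coeff_sub, Polynomial.coeff_C_mul, hWp0, Polynomial.coeff_one]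
    simp [inv_mul_cancel₀ hβ0]
  obtain ⟨Z0, hZ0fac⟩ : (Polynomial.X : Polynomial L) ∣ Z := Polynomial.X_dvd_iff.mpr hZc0
  have hZ0coeff : ∀ t : ℕ, Z.coeff (t+1) = Z0.coeff t := by
    intro t
    rw [hZ0fac, Polynomial.coeff_X_mul]
  have hZcsucc : ∀ t : ℕ, Z.coeff (t+1) = β⁻¹ * Wp.coeff (t+1) := by
    intro t
    rw [hZdef, Polynomial.coeff_sub, Polynomial.coeff_C_mul, Polynomial.coeff_one]
    simp
  have hwβinv : w β⁻¹ = ((-1 : ℤ) : WithTop ℤ) := val_inv w hwβ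
  have hZ0val : ∀ t : ℕ, ((t:ℤ) : WithTop ℤ) ≤ w (Z0.coeff t) := by
    intro t
    rw [← hZ0coeff, hZcsucc, w.map_mul, hwβinv]
    calc ((t:ℤ) : WithTop ℤ) = ((-1 : ℤ) : WithTop ℤ) + (((t+1 : ℕ) :ℤ) : WithTop ℤ) := by
          rw [← WithTop.coe_add]
          exact_mod_cast congrArg (fun z : ℤ => (z : WithTop ℤ))
            (show (t:ℤ) = -1 + ((t:ℤ)+1) by ring)
      _ ≤ ((-1 : ℤ) : WithTop ℤ) + w (Wp.coeff (t+1)) := add_le_add le_rfl (hWpval (t+1))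
  -- ε = Z.coeff 1 - 1 has positive valuation
  have hε2 : ((2:ℤ) : WithTop ℤ) ≤ w (Wp.coeff 1 - β) := by
    have e2 : Wp.coeff 1 - β = ∑ k ∈ Finset.range (γ.natDegree + 1),
        algebraMap K L (γ.coeff k) * α ^ k * ((k.choose 1 : L) - 1) := by
      rw [hWpdef, hudef, comp_linear_coeff, ← hγα,
        aeval_expand γ (lt_add_one _), ← Finset.sum_sub_distrib]
      exact Finset.sum_congr rfl fun k _ => by ring
    rw [e2]
    refine val_sum_ge w _ _ fun k _ => ?_
    rcases Nat.lt_or_ge k 2 with hk2 | hk2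
    · interval_cases k
      · have hγ0 : γ.coeff 0 = 0 := by
          rw [hγdef, Polynomial.mul_coeff_zero, Polynomial.coeff_X_zero, zero_mul]
        rw [hγ0, map_zero, zero_mul, zero_mul, w.map_zero]
        exact le_top
      · have h11 : ((Nat.choose 1 1 : ℕ) : L) - 1 = 0 := by norm_num
        rw [h11, mul_zero, w.map_zero]
        exact le_top
    · rw [w.map_mul, w.map_mul]
      have h1 : 0 ≤ w (algebraMap K L (γ.coeff k)) := w_alg_nonneg v w n hcompat (hγint k)
      have h3 : 0 ≤ w (((k.choose 1 : L)) - 1) := by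
        rw [Nat.choose_one_right]
        have : ((k : L)) - 1 = (((k - 1 : ℕ)) : L) := by
          have : (1:ℕ) ≤ k := by omega
          push_cast [this]
          ring
        rw [this]
        exact val_natCast_nonneg w _
      calc ((2:ℤ) : WithTop ℤ) ≤ ((k:ℤ) : WithTop ℤ) := by exact_mod_cast hk2
        _ = 0 + ((k:ℤ) : WithTop ℤ) + 0 := by rw [zero_add, add_zero]
        _ ≤ _ := add_le_add (add_le_add h1 (le_of_eq (hwαpow k).symm)) h3
  have hεval : ((1:ℤ) : WithTop ℤ) ≤ w (Z.coeff 1 - 1) := by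
    have e1 : Z.coeff 1 - 1 = β⁻¹ * (Wp.coeff 1 - β) := by
      rw [show (1:ℕ) = 0 + 1 from rfl, hZcsucc 0]
      field_simp
    rw [e1, w.map_mul, hwβinv]
    calc ((1:ℤ) : WithTop ℤ) = ((-1:ℤ) : WithTop ℤ) + ((2:ℤ) : WithTop ℤ) := by
          rw [← WithTop.coe_add]; norm_num
      _ ≤ _ := add_le_add le_rfl hε2
  -- Z powers
  have hZpow_gt : ∀ i m : ℕ, m < i → (Z ^ i).coeff m = 0 := by
    intro i m him
    rw [hZ0fac, mul_pow, mul_comm ((Polynomial.X : Polynomial L) ^ i), Polynomial.coeff_mul_X_pow']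
    rw [if_neg (by omega)]
  have hZpow_le : ∀ i m : ℕ, i ≤ m → (Z ^ i).coeff m = (Z0 ^ i).coeff (m - i) := by
    intro i m him
    rw [hZ0fac, mul_pow, mul_comm ((Polynomial.X : Polynomial L) ^ i), Polynomial.coeff_mul_X_pow']
    rw [if_pos him]
  have hZpow_diag : ∀ i : ℕ, (Z ^ i).coeff i = (Z.coeff 1) ^ i := by
    intro i
    rw [hZpow_le i i le_rfl, Nat.sub_self]
    have h1 : (Z0 ^ i).coeff 0 = (Z0.coeff 0) ^ i := by
      rw [← Polynomial.constantCoeff_apply, ← Polynomial.constantCoeff_apply, map_pow]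
    rw [h1, ← hZ0coeff 0]
  have hwδn : w (δ ^ n) = ((0:ℤ) : WithTop ℤ) := by
    rw [w.map_pow, hδcoe, nsmul_coe]
    norm_num
  -- the "gap ≥ 1" line bound
  have hgap : ∀ (R : ℕ → L)
      (_ : ∀ mm : ℕ, 1 ≤ mm → mm ≤ n → ∀ c : ℤ, w (R mm) = (c : WithTop ℤ) →
        (e:ℤ)*y0 - h*((mm:ℤ)-x0) ≤ e*c)
      (jj i d : ℕ), 1 ≤ i → i ≤ n → i + d = jj*e + x0 → 1 ≤ d →
      ((y0 - (jj:ℤ)*h + 1 : ℤ) : WithTop ℤ) ≤ ((d:ℤ) : WithTop ℤ) + w (R i) := by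
    intro R hb jj i d hi1 hin hid hd1
    rcases eq_or_ne (w (R i)) ⊤ with htop | hne
    · rw [htop, add_top]; exact le_top
    obtain ⟨c, hc⟩ := WithTop.ne_top_iff_exists.1 hne
    rw [← hc, ← WithTop.coe_add, WithTop.coe_le_coe]
    have hbc := hb i hi1 hin c hc.symm
    have he : (0:ℤ) < e := by exact_mod_cast hepos
    have hh : (0:ℤ) ≤ h := by positivity
    have hdd : (1:ℤ) ≤ d := by exact_mod_cast hd1
    have hixz : (i:ℤ) - x0 = (jj:ℤ)*e - d := by
      have hq : (i:ℤ) + d = (jj:ℤ)*e + x0 := by exact_mod_cast hid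
      linarith
    rw [hixz] at hbc
    by_contra hlt
    push_neg at hlt
    have h4 : d + c ≤ y0 - (jj:ℤ)*h := by omega
    have h5 : (e:ℤ)*(d + c) ≤ e*(y0 - (jj:ℤ)*h) := mul_le_mul_of_nonneg_left h4 (le_of_lt he)
    have h6 : (e:ℤ)*1 ≤ e*d := mul_le_mul_of_nonneg_left hdd (le_of_lt he)
    have h7 : (0:ℤ) ≤ h*d := mul_nonneg hh (by linarith)
    linarith
  -- the "on the line" bound
  have hline0 : ∀ (R : ℕ → L)
      (_ : ∀ mm : ℕ, 1 ≤ mm → mm ≤ n → ∀ c : ℤ, w (R mm) = (c : WithTop ℤ) →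
        (e:ℤ)*y0 - h*((mm:ℤ)-x0) ≤ e*c)
      (jj : ℕ), jj*e + x0 ≤ n →
      ((y0 - (jj:ℤ)*h : ℤ) : WithTop ℤ) ≤ w (R (jj*e + x0)) := by
    intro R hb jj hjn
    rcases eq_or_ne (w (R (jj*e+x0))) ⊤ with htop | hne
    · rw [htop]; exact le_top
    obtain ⟨c, hc⟩ := WithTop.ne_top_iff_exists.1 hne
    rw [← hc, WithTop.coe_le_coe]
    have hbc := hb (jj*e+x0) (by omega) hjn c hc.symm
    have h3 : ((jj*e+x0 : ℕ):ℤ) - x0 = (jj:ℤ)*e := by push_cast; ring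
    rw [h3] at hbc
    have h4 : (e:ℤ)*(y0 - jj*h) ≤ e*c := by linarith
    exact le_of_mul_le_mul_left h4 (by exact_mod_cast hepos)
  have hloe : ∀ j : ℕ, j ≤ (x1-x0)/e → j*e + x0 ≤ n := by
    intro j hj
    have h1 : j * e ≤ ((x1 - x0)/e) * e := Nat.mul_le_mul_right e hj
    have h2 : ((x1-x0)/e)*e ≤ x1 - x0 := Nat.div_mul_le_self _ _
    omega
  have key : ∀ j : ℕ, j ≤ (x1 - x0)/e →
      ((y0 - (j:ℤ)*h + 1 : ℤ) : WithTop ℤ)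
        ≤ w (δ^n * rho ψ β n (j*e+x0) - Polynomial.aeval α H * rho φ α n (j*e+x0)) := by
    intro j hj
    set m := j*e + x0 with hmdef
    have hm1 : 1 ≤ m := by omega
    have hmn : m ≤ n := hloe j hj
    have heqc : (Fψ.comp Z).coeff m = (Fφ * Gc).coeff m := by rw [hmaster]
    have hFψdeg2 : Fψ.natDegree < n + 1 := by
      have h1 : Fψ.natDegree ≤ (ψ.map (algebraMap K L)).natDegree * u'.natDegree :=
        Polynomial.natDegree_comp_le
      have h2 : u'.natDegree ≤ 1 := by
        rw [hu'def]
        refine le_trans (Polynomial.natDegree_add_le _ _) (max_le ?_ ?_)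
        · exact le_trans (Polynomial.natDegree_C_mul_le _ _) (le_of_eq Polynomial.natDegree_X)
        · simp
      have h3 : (ψ.map (algebraMap K L)).natDegree ≤ n := by
        rw [← hψdeg]; exact Polynomial.natDegree_map_le
      calc Fψ.natDegree ≤ _ * _ := h1
        _ ≤ n * 1 := Nat.mul_le_mul h3 h2
        _ < n + 1 := by omega
    have hLHS : (Fψ.comp Z).coeff m
        = ∑ i ∈ Finset.range (n+1), rho ψ β n i * (Z^i).coeff m * β^n := by
      conv_lhs => rw [Polynomial.comp_eq_sum_left]
      rw [Polynomial.sum_over_range' _ (fun mm => by simp) (n+1) hFψdeg2,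
        Polynomial.finset_sum_coeff]
      refine Finset.sum_congr rfl fun i _ => ?_
      rw [Polynomial.coeff_C_mul, hFψc i]
      ring
    have hRHS : (Fφ * Gc).coeff m
        = ∑ pr ∈ Finset.HasAntidiagonal.antidiagonal m, α^n * (rho φ α n pr.1 * Gc.coeff pr.2) := by
      rw [Polynomial.coeff_mul]
      refine Finset.sum_congr rfl fun pr _ => ?_
      rw [hFφc]
      ring
    have hβn : (β:L)^n = α^n * δ^n := by rw [hβ]; ring
    have emain : δ^n * (∑ i ∈ Finset.range (n+1), rho ψ β n i * (Z^i).coeff m)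
        = ∑ pr ∈ Finset.HasAntidiagonal.antidiagonal m, rho φ α n pr.1 * Gc.coeff pr.2 := by
      apply mul_left_cancel₀ (pow_ne_zero n hα0)
      calc α^n * (δ^n * ∑ i ∈ Finset.range (n+1), rho ψ β n i * (Z^i).coeff m)
          = ∑ i ∈ Finset.range (n+1), rho ψ β n i * (Z^i).coeff m * β^n := by
            rw [Finset.mul_sum, Finset.mul_sum]
            refine Finset.sum_congr rfl fun i _ => ?_
            rw [hβn]; ring
        _ = (Fψ.comp Z).coeff m := hLHS.symm
        _ = (Fφ * Gc).coeff m := heqc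
        _ = ∑ pr ∈ Finset.HasAntidiagonal.antidiagonal m, α^n * (rho φ α n pr.1 * Gc.coeff pr.2) := hRHS
        _ = α^n * ∑ pr ∈ Finset.HasAntidiagonal.antidiagonal m, rho φ α n pr.1 * Gc.coeff pr.2 := by
            rw [Finset.mul_sum]
    have hmmem : m ∈ Finset.range (n+1) := Finset.mem_range.mpr (by omega)
    have hpmem : ((m, 0) : ℕ × ℕ) ∈ Finset.HasAntidiagonal.antidiagonal m := by simp
    rw [← Finset.add_sum_erase _ _ hmmem, ← Finset.add_sum_erase _ _ hpmem] at emain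
    have hzd := hZpow_diag m
    rw [hzd, hGc0] at emain
    have hD : δ^n * rho ψ β n m - Polynomial.aeval α H * rho φ α n m
        = (∑ pr ∈ (Finset.HasAntidiagonal.antidiagonal m).erase (m,0), rho φ α n pr.1 * Gc.coeff pr.2)
          + (- (δ^n * (∑ i ∈ (Finset.range (n+1)).erase m, rho ψ β n i * (Z^i).coeff m)))
          + (- (δ^n * rho ψ β n m * ((Z.coeff 1)^m - 1))) := by
      linear_combination emain
    rw [hD]
    have hTm : ∀ x y : L, ((y0 - (j:ℤ)*h + 1 : ℤ) : WithTop ℤ) ≤ w x →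
        ((y0 - (j:ℤ)*h + 1 : ℤ) : WithTop ℤ) ≤ w y →
        ((y0 - (j:ℤ)*h + 1 : ℤ) : WithTop ℤ) ≤ w (x + y) := fun x y hx hy =>
      le_trans (le_min hx hy) (w.map_add x y)
    refine hTm _ _ (hTm _ _ ?_ ?_) ?_
    · refine val_sum_ge w _ _ fun pr hpr => ?_
      have hprm : pr.1 + pr.2 = m := Finset.HasAntidiagonal.mem_antidiagonal.mp (Finset.mem_of_mem_erase hpr)
      have hprne : pr ≠ (m, 0) := Finset.ne_of_mem_erase hpr
      have hpr2 : 1 ≤ pr.2 := by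
        rcases Nat.eq_zero_or_pos pr.2 with h0 | h0
        · exfalso
          apply hprne
          have hp1 : pr.1 = m := by omega
          exact Prod.ext hp1 h0
        · exact h0
      rcases Nat.eq_zero_or_pos pr.1 with h0 | h0
      · rw [h0, rho_zero n φ hdeg.le hα0 hroot, zero_mul, w.map_zero]
        exact le_top
      · rw [w.map_mul]
        have hb1 := hgap (fun i => rho φ α n i) hbound j pr.1 pr.2 h0 (by omega) (by omega) hpr2
        calc ((y0 - (j:ℤ)*h + 1 : ℤ) : WithTop ℤ)
            ≤ ((pr.2:ℤ):WithTop ℤ) + w (rho φ α n pr.1) := hb1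
          _ ≤ w (Gc.coeff pr.2) + w (rho φ α n pr.1) := add_le_add (hGcval pr.2) le_rfl
          _ = w (rho φ α n pr.1) + w (Gc.coeff pr.2) := add_comm _ _
    · rw [w.map_neg, w.map_mul, hwδn, show ((0:ℤ) : WithTop ℤ) = (0 : WithTop ℤ) from rfl,
        zero_add]
      refine val_sum_ge w _ _ fun i hi => ?_
      have hiR : i ∈ Finset.range (n+1) := Finset.mem_of_mem_erase hi
      have hine : i ≠ m := Finset.ne_of_mem_erase hi
      rw [Finset.mem_range] at hiR
      rcases Nat.lt_or_ge m i with him | him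
      · rw [hZpow_gt i m him, mul_zero, w.map_zero]
        exact le_top
      rcases Nat.eq_zero_or_pos i with h0 | h0
      · rw [h0, rho_zero n ψ hψdeg.le hβ0 hψaev, zero_mul, w.map_zero]
        exact le_top
      · have hdpos : 1 ≤ m - i := by omega
        rw [w.map_mul]
        have hZv : (((m - i : ℕ):ℤ):WithTop ℤ) ≤ w ((Z^i).coeff m) := by
          rw [hZpow_le i m him]
          exact coeff_val_ge_pow w hZ0val i (m - i)
        have hb2 := hgap (fun i => rho ψ β n i) hbound' j i (m-i) h0 (by omega) (by omega) hdpos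
        calc ((y0 - (j:ℤ)*h + 1 : ℤ) : WithTop ℤ)
            ≤ (((m-i:ℕ):ℤ):WithTop ℤ) + w (rho ψ β n i) := hb2
          _ ≤ w ((Z^i).coeff m) + w (rho ψ β n i) := add_le_add hZv le_rfl
          _ = w (rho ψ β n i) + w ((Z^i).coeff m) := add_comm _ _
    · rw [w.map_neg, w.map_mul, w.map_mul, hwδn, show ((0:ℤ) : WithTop ℤ) = (0 : WithTop ℤ) from rfl,
        zero_add]
      have h1 := hline0 (fun i => rho ψ β n i) hbound' j hmn
      have h2' : ((1:ℤ) : WithTop ℤ) ≤ w ((Z.coeff 1)^m - 1) := by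
        have hform : 1 + (Z.coeff 1 - 1) = Z.coeff 1 := by ring
        have := one_add_pow_sub_one w hεval m
        rwa [hform] at this
      calc ((y0 - (j:ℤ)*h + 1 : ℤ) : WithTop ℤ)
          = ((y0 - (j:ℤ)*h : ℤ) : WithTop ℤ) + ((1:ℤ) : WithTop ℤ) := by
            rw [← WithTop.coe_add]
        _ ≤ w (rho ψ β n m) + w ((Z.coeff 1)^m - 1) := add_le_add h1 h2'
  -- residue machinery
  have hwδz : ∀ z : ℤ, w (δ ^ z) = ((0:ℤ) : WithTop ℤ) := by
    intro z
    rw [val_zpow w hδcoe]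
    norm_num
  have hmemδz : ∀ z : ℤ, δ ^ z ∈ vintegers w := fun z =>
    (mem_vintegers w).mpr (by rw [hwδz z]; exact le_rfl)
  have hmemδ : δ ∈ vintegers w := (mem_vintegers w).mpr (by rw [hδcoe]; exact le_rfl)
  have hmemlift : ∀ x : 𝕜, algebraMap K L (lift x) ∈ vintegers w :=
    fun x => (mem_vintegers w).mpr (w_alg_nonneg v w n hcompat (hlift_int x))
  have hresδ : res ⟨δ, hmemδ⟩ = dbar := by
    have h1 := res_eq_of_val_pos w res hres_ker hmemδ (hmemlift dbar) hdbar
    rw [h1, hlift_sect]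
  have hdbar0 : dbar ≠ 0 := by
    intro h0
    have h2 := (hres_ker ⟨δ, hmemδ⟩).mp (by rw [hresδ, h0])
    simp only [hδcoe] at h2
    exact absurd h2 (by norm_num)
  have hresδz : ∀ z : ℤ, res ⟨δ ^ z, hmemδz z⟩ = dbar ^ z := by
    intro z
    cases z with
    | ofNat k =>
      have h1 : (⟨δ ^ (Int.ofNat k : ℤ), hmemδz _⟩ : vintegers w) = ⟨δ, hmemδ⟩ ^ k := by
        apply Subtype.ext
        show δ ^ (Int.ofNat k : ℤ) = ((⟨δ, hmemδ⟩ ^ k : vintegers w) : L)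
        rw [SubmonoidClass.coe_pow]
        exact zpow_natCast δ k
      rw [h1, map_pow, hresδ]
      exact (zpow_natCast dbar k).symm
    | negSucc k =>
      have hmul : (⟨δ ^ (Int.negSucc k), hmemδz _⟩ : vintegers w) * ⟨δ, hmemδ⟩ ^ (k+1) = 1 := by
        apply Subtype.ext
        show δ ^ (Int.negSucc k) * ((⟨δ, hmemδ⟩ ^ (k+1) : vintegers w) : L) = 1
        rw [SubmonoidClass.coe_pow, zpow_negSucc]
        exact inv_mul_cancel₀ (pow_ne_zero _ hδ0)
      have h2 := congrArg res hmul
      rw [map_mul, map_pow, hresδ, map_one] at h2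
      rw [eq_inv_of_mul_eq_one_left h2, zpow_negSucc]
  -- memberships and residues of the segment terms
  have hwαzz : ∀ z : ℤ, w (α ^ z) = (z : WithTop ℤ) := by
    intro z
    rw [val_zpow w hα]
    norm_num
  have hwβzz : ∀ z : ℤ, w (β ^ z) = (z : WithTop ℤ) := by
    intro z
    rw [val_zpow w hwβ]
    norm_num
  have hmemt : ∀ j : ℕ, j ≤ (x1-x0)/e →
      rho φ α n (j*e+x0) * α ^ ((j:ℤ)*h - y0) ∈ vintegers w := by
    intro j hj
    refine (mem_vintegers w).mpr ?_
    rw [w.map_mul, hwαzz]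
    have hwρm := hline0 (fun i => rho φ α n i) hbound j (hloe j hj)
    calc (0 : WithTop ℤ) = ((y0 - (j:ℤ)*h : ℤ) : WithTop ℤ) + (((j:ℤ)*h - y0 : ℤ) : WithTop ℤ) := by
          rw [← WithTop.coe_add]
          norm_num
      _ ≤ _ := add_le_add hwρm le_rfl
  have hmemu : ∀ j : ℕ, j ≤ (x1-x0)/e →
      rho ψ β n (j*e+x0) * β ^ ((j:ℤ)*h - y0) ∈ vintegers w := by
    intro j hj
    refine (mem_vintegers w).mpr ?_
    rw [w.map_mul, hwβzz]
    have hwρm := hline0 (fun i => rho ψ β n i) hbound' j (hloe j hj)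
    calc (0 : WithTop ℤ) = ((y0 - (j:ℤ)*h : ℤ) : WithTop ℤ) + (((j:ℤ)*h - y0 : ℤ) : WithTop ℤ) := by
          rw [← WithTop.coe_add]
          norm_num
      _ ≤ _ := add_le_add hwρm le_rfl
  have hrest : ∀ j : ℕ, ∀ hj : j ≤ (x1-x0)/e,
      res ⟨rho φ α n (j*e+x0) * α ^ ((j:ℤ)*h - y0), hmemt j hj⟩ = A.coeff j := by
    intro j hj
    have h1 := res_eq_of_val_pos w res hres_ker (hmemt j hj) (hmemlift (A.coeff j)) (hAres j hj)
    rw [h1, hlift_sect]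
  have hresu : ∀ j : ℕ, ∀ hj : j ≤ (x1-x0)/e,
      res ⟨rho ψ β n (j*e+x0) * β ^ ((j:ℤ)*h - y0), hmemu j hj⟩ = A'.coeff j := by
    intro j hj
    have h1 := res_eq_of_val_pos w res hres_ker (hmemu j hj) (hmemlift (A'.coeff j)) (hAres' j hj)
    rw [h1, hlift_sect]
  -- the coefficient relation
  have hrel : ∀ j : ℕ, ∀ hj : j ≤ (x1-x0)/e,
      dbar ^ ((n:ℤ) + y0 - (j:ℤ)*h) * A'.coeff j
        = res ⟨Polynomial.aeval α H, hHαval⟩ * A.coeff j := by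
    intro j hj
    set m := j*e+x0 with hmdef
    set z : ℤ := (j:ℤ)*h - y0 with hzdef
    have hkey := key j hj
    have hXY : 0 < w ((δ^n * rho ψ β n m) * α ^ z
        - Polynomial.aeval α H * (rho φ α n m * α ^ z)) := by
      have hfactor : (δ^n * rho ψ β n m) * α ^ z
          - Polynomial.aeval α H * (rho φ α n m * α ^ z)
          = (δ^n * rho ψ β n m - Polynomial.aeval α H * rho φ α n m) * α ^ z := by ring
      rw [hfactor, w.map_mul, hwαzz]
      calc (0:WithTop ℤ) < ((1:ℤ):WithTop ℤ) := by
            exact_mod_cast (zero_lt_one : (0:ℤ) < 1)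
        _ = ((y0 - (j:ℤ)*h + 1 : ℤ) : WithTop ℤ) + ((z:ℤ) : WithTop ℤ) := by
            rw [← WithTop.coe_add, hzdef]
            have : (1:ℤ) = y0 - (j:ℤ)*h + 1 + ((j:ℤ)*h - y0) := by ring
            exact_mod_cast congrArg (fun q : ℤ => (q : WithTop ℤ)) this
        _ ≤ _ := add_le_add hkey le_rfl
    have hmemX : (δ^n * rho ψ β n m) * α ^ z ∈ vintegers w := by
      refine (mem_vintegers w).mpr ?_
      rw [w.map_mul, w.map_mul, hwδn, hwαzz]
      have hwρm := hline0 (fun i => rho ψ β n i) hbound' j (hloe j hj)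
      calc (0 : WithTop ℤ) = (((0:ℤ)) : WithTop ℤ) + (((y0 - (j:ℤ)*h : ℤ) : WithTop ℤ)
            + ((z:ℤ) : WithTop ℤ)) := by
            rw [← WithTop.coe_add, ← WithTop.coe_add, hzdef]
            norm_num
        _ ≤ ((0:ℤ) : WithTop ℤ) + (w (rho ψ β n m) + ((z:ℤ) : WithTop ℤ)) := by
            exact add_le_add le_rfl (add_le_add hwρm le_rfl)
        _ = _ := by rw [add_assoc]
    have hmemY : Polynomial.aeval α H * (rho φ α n m * α ^ z) ∈ vintegers w := by
      refine (mem_vintegers w).mpr ?_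
      rw [w.map_mul]
      exact add_nonneg hHαval (hmemt j hj)
    have hresXY := res_eq_of_val_pos w res hres_ker hmemX hmemY hXY
    have hY : (⟨Polynomial.aeval α H * (rho φ α n m * α ^ z), hmemY⟩ : vintegers w)
        = ⟨Polynomial.aeval α H, hHαval⟩ * ⟨rho φ α n m * α ^ z, hmemt j hj⟩ :=
      Subtype.ext rfl
    have hXid : (δ^n * rho ψ β n m) * α ^ z = δ ^ ((n:ℤ) - z) * (rho ψ β n m * β ^ z) := by
      rw [hβ, mul_zpow, zpow_sub₀ hδ0, zpow_natCast]
      have hδz : δ ^ z ≠ 0 := zpow_ne_zero _ hδ0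
      field_simp
    have hX : (⟨(δ^n * rho ψ β n m) * α ^ z, hmemX⟩ : vintegers w)
        = ⟨δ ^ ((n:ℤ) - z), hmemδz _⟩ * ⟨rho ψ β n m * β ^ z, hmemu j hj⟩ :=
      Subtype.ext hXid
    rw [hX, hY, map_mul, map_mul, hresδz, hrest j hj, hresu j hj] at hresXY
    have hexp : (n:ℤ) + y0 - (j:ℤ)*h = (n:ℤ) - z := by rw [hzdef]; ring
    rw [hexp]
    exact hresXY
  -- nonvanishing of the constant coefficients
  have hw0A : A.coeff 0 ≠ 0 := by
    intro h0
    have h1 := hrest 0 (Nat.zero_le _)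
    rw [h0] at h1
    have h2 := (hres_ker _).mp h1
    have hwt0 : w (rho φ α n (0*e+x0) * α ^ (((0:ℕ):ℤ)*h - y0)) = ((0:ℤ) : WithTop ℤ) := by
      have hidx : 0*e+x0 = x0 := by omega
      rw [hidx, w.map_mul, hwx0, hwαzz]
      rw [← WithTop.coe_add]
      norm_num
    rw [hwt0] at h2
    exact absurd h2 (by norm_num)
  have hw0A' : A'.coeff 0 ≠ 0 := by
    intro h0
    have h1 := hresu 0 (Nat.zero_le _)
    rw [h0] at h1
    have h2 := (hres_ker _).mp h1
    have hwt0 : w (rho ψ β n (0*e+x0) * β ^ (((0:ℕ):ℤ)*h - y0)) = ((0:ℤ) : WithTop ℤ) := by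
      have hidx : 0*e+x0 = x0 := by omega
      rw [hidx, w.map_mul, hwx0', hwβzz]
      rw [← WithTop.coe_add]
      norm_num
    rw [hwt0] at h2
    exact absurd h2 (by norm_num)
  have hc00 : res ⟨Polynomial.aeval α H, hHαval⟩ ≠ 0 := by
    intro h0
    have hr0 := hrel 0 (Nat.zero_le _)
    rw [h0, zero_mul] at hr0
    exact (mul_ne_zero (zpow_ne_zero _ hdbar0) hw0A') hr0
  -- the global coefficient relation
  set c0 : 𝕜 := res ⟨Polynomial.aeval α H, hHαval⟩ with hc0def
  set c1 : 𝕜 := c0 * dbar ^ (-(n:ℤ) - y0) with hc1def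
  have hcoeffrel : ∀ j : ℕ, A'.coeff j = c1 * (dbar ^ h)^j * A.coeff j := by
    intro j
    rcases le_or_gt j ((x1-x0)/e) with hj | hj
    · have hr := hrel j hj
      have h1 : A'.coeff j = dbar ^ (-((n:ℤ) + y0 - (j:ℤ)*h)) * (c0 * A.coeff j) := by
        rw [← hr, ← mul_assoc, ← zpow_add₀ hdbar0]
        norm_num
      have h2 : ((dbar ^ h : 𝕜))^j = dbar ^ (((h*j : ℕ)):ℤ) := by
        rw [zpow_natCast, pow_mul]
      have h3 : dbar ^ (-((n:ℤ) + y0 - (j:ℤ)*h)) = dbar ^ (-(n:ℤ) - y0) * dbar ^ (((h*j : ℕ)):ℤ) := by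
        rw [← zpow_add₀ hdbar0]
        congr 1
        push_cast
        ring
      rw [h1, h3, hc1def, h2]
      ring
    · have hz1 : A'.coeff j = 0 := Polynomial.coeff_eq_zero_of_natDegree_lt (by omega)
      have hz2 : A.coeff j = 0 := Polynomial.coeff_eq_zero_of_natDegree_lt (by omega)
      rw [hz1, hz2, mul_zero]
  have hc10 : c1 ≠ 0 := mul_ne_zero hc00 (zpow_ne_zero _ hdbar0)
  have hb0 : (dbar ^ h : 𝕜) ≠ 0 := pow_ne_zero _ hdbar0
  have hA0 : A ≠ 0 := fun hh => hw0A (by rw [hh]; simp)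
  have hA'eq : A' = Polynomial.C c1 * (A.comp (Polynomial.C (dbar ^ h) * Polynomial.X)) := by
    ext j
    rw [Polynomial.coeff_C_mul, Stmt14Aux.comp_C_mul_X_coeff, hcoeffrel j]
    ring
  -- roots
  have hmapeq : A'.map (algebraMap 𝕜 (AlgebraicClosure 𝕜))
      = Polynomial.C (algebraMap 𝕜 (AlgebraicClosure 𝕜) c1)
        * ((A.map (algebraMap 𝕜 (AlgebraicClosure 𝕜))).comp
            (Polynomial.C (algebraMap 𝕜 (AlgebraicClosure 𝕜) (dbar ^ h)) * Polynomial.X)) := by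
    rw [hA'eq, Polynomial.map_mul, Polynomial.map_C, Polynomial.map_comp, Polynomial.map_mul,
      Polynomial.map_C, Polynomial.map_X]
  have hfc1 : algebraMap 𝕜 (AlgebraicClosure 𝕜) c1 ≠ 0 := by
    simp [_root_.map_eq_zero, hc10]
  have hfb : algebraMap 𝕜 (AlgebraicClosure 𝕜) (dbar ^ h) ≠ 0 := by
    simp [_root_.map_eq_zero, hb0, hdbar0]
  have hAm0 : A.map (algebraMap 𝕜 (AlgebraicClosure 𝕜)) ≠ 0 :=
    Polynomial.map_ne_zero hA0
  rw [hmapeq, Polynomial.roots_C_mul _ hfc1,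
    roots_comp_C_mul_X _ hAm0 hfb]
  congr 1
  funext zz
  rw [map_pow]
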